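/- Let L ⊆ X be a closed subspace and suppose E has a local peak selection p at some point x₀ ∈ S_{L⊥} with respect to L such that: (a) p is continuous at x₀; (b) inf_{u∈L} ‖p(x₀) − u‖ ≥ α for some constant α > 0; (c) x₀ is a local minimum point of the map v ↦ E(p(v)) on S_{L⊥}. Then p(x₀) is a critical point of E, i.e. E'(p(x₀)) = 0 in X*. -/

import Mathlib

open scoped RealInnerProductSpace

/-- The closed half space `L_v = L + {t v : t ≥ 0}`. -/
def halfSpace {X : Type*} [NormedAddCommGroup X] [InnerProductSpace ℝ X]
    (L : Submodule ℝ X) (v : X) : Set X :=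
  {w | ∃ u ∈ L, ∃ t : ℝ, 0 ≤ t ∧ w = u + t • v}

/-- `w₀` is a local maximum of `E` in the half space `L_v`. -/
def IsLocalMaxIn {X : Type*} [NormedAddCommGroup X] [InnerProductSpace ℝ X]
    (E : X → ℝ) (L : Submodule ℝ X) (v w₀ : X) : Prop :=
  w₀ ∈ halfSpace L v ∧
    ∃ δ > (0 : ℝ), ∀ w ∈ halfSpace L v, ‖w - w₀‖ < δ → E w ≤ E w₀

set_option maxHeartbeats 1000000 in
/-- **Li–Zhou, Theorem 2.1**: a local minimum point of `E ∘ p` along a continuous local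
peak selection `p`, staying away from `L`, yields a critical point of `E`. -/
theorem critical_point_of_local_peak_selection
    {X : Type*} [NormedAddCommGroup X] [InnerProductSpace ℝ X] [CompleteSpace X]
    (E : X → ℝ) (E' : X → X →L[ℝ] ℝ)
    (hE : ∀ x, HasFDerivAt E (E' x) x) (hE' : Continuous E')
    (L : Submodule ℝ X) (hL : IsClosed (L : Set X))
    (x₀ : X) (hx₀mem : x₀ ∈ Lᗮ) (hx₀norm : ‖x₀‖ = 1)
    (δ : ℝ) (hδ : 0 < δ)
    (p : X → X)
    (hp : ∀ v, v ∈ Lᗮ → ‖v‖ = 1 → ‖v - x₀‖ < δ → IsLocalMaxIn E L v (p v))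
    (hpcont : ContinuousWithinAt p {v : X | v ∈ Lᗮ ∧ ‖v‖ = 1 ∧ ‖v - x₀‖ < δ} x₀)
    (α : ℝ) (hα : 0 < α) (hdist : ∀ u ∈ L, α ≤ ‖p x₀ - u‖)
    (hmin : IsLocalMinOn (fun v => E (p v))
      {v : X | v ∈ Lᗮ ∧ ‖v‖ = 1 ∧ ‖v - x₀‖ < δ} x₀) :
    E' (p x₀) = 0 := by
  classical
  have hEc : Continuous E := by
    rw [continuous_iff_continuousAt]; exact fun x => (hE x).continuousAt
  set S : Set X := {v : X | v ∈ Lᗮ ∧ ‖v‖ = 1 ∧ ‖v - x₀‖ < δ} with hS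
  have hx₀self : ‖x₀ - x₀‖ < δ := by simpa using hδ
  obtain ⟨⟨u₀, hu₀, t₀, ht₀, hPeq⟩, δ₀, hδ₀, hmax⟩ := hp x₀ hx₀mem hx₀norm hx₀self
  have ht₀α : α ≤ t₀ := by
    have h1 := hdist u₀ hu₀
    have h2 : p x₀ - u₀ = t₀ • x₀ := by rw [hPeq]; abel
    rw [h2, norm_smul, hx₀norm, Real.norm_eq_abs, mul_one, abs_of_nonneg ht₀] at h1
    exact h1
  have ht₀pos : 0 < t₀ := lt_of_lt_of_le hα ht₀α
  -- derivative vanishes in any direction along which the half space is locally stable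
  have key_dir : ∀ y : X, (∀ᶠ τ in nhds (0 : ℝ), p x₀ + τ • y ∈ halfSpace L x₀) →
      E' (p x₀) y = 0 := by
    intro y hy
    have h1 : HasDerivAt (fun τ : ℝ => p x₀ + τ • y) y 0 := by
      simpa using ((hasDerivAt_id (0 : ℝ)).smul_const y).const_add (p x₀)
    have hd : HasDerivAt (fun τ : ℝ => E (p x₀ + τ • y)) (E' (p x₀) y) 0 := by
      have := (hE (p x₀ + (0 : ℝ) • y)).comp_hasDerivAt 0 h1
      simp only [zero_smul, add_zero] at this
      exact this
    have habs : Filter.Tendsto (fun τ : ℝ => |τ| * ‖y‖) (nhds 0) (nhds 0) := by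
      have := ((continuous_abs.tendsto (0 : ℝ)).mul_const ‖y‖)
      simpa using this
    have hsmall : ∀ᶠ τ : ℝ in nhds 0, ‖(p x₀ + τ • y) - p x₀‖ < δ₀ := by
      filter_upwards [habs.eventually_lt_const hδ₀] with τ hτ
      rw [add_sub_cancel_left, norm_smul, Real.norm_eq_abs]
      exact hτ
    have hmax0 : IsLocalMax (fun τ : ℝ => E (p x₀ + τ • y)) 0 := by
      show ∀ᶠ τ : ℝ in nhds 0, E (p x₀ + τ • y) ≤ E (p x₀ + (0 : ℝ) • y)
      filter_upwards [hy, hsmall] with τ h1' h2'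
      have := hmax _ h1' h2'
      simpa using this
    exact hmax0.hasDerivAt_eq_zero hd
  have hA : ∀ u ∈ L, E' (p x₀) u = 0 := by
    intro u hu
    apply key_dir
    apply Filter.Eventually.of_forall
    intro τ
    exact ⟨u₀ + τ • u, L.add_mem hu₀ (L.smul_mem τ hu), t₀, ht₀, by rw [hPeq]; abel⟩
  have hAx : E' (p x₀) x₀ = 0 := by
    apply key_dir
    have habs : Filter.Tendsto (fun τ : ℝ => |τ|) (nhds 0) (nhds 0) := by
      simpa using (continuous_abs.tendsto (0 : ℝ))
    filter_upwards [habs.eventually_lt_const ht₀pos] with τ hτ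
    have h := abs_lt.mp hτ
    refine ⟨u₀, hu₀, t₀ + τ, by linarith [h.1], ?_⟩
    rw [hPeq, add_smul]; abel
  -- the key half: derivative is ≤ 0 in unit directions orthogonal to both L and x₀
  have hB : ∀ w : X, w ∈ Lᗮ → ⟪x₀, w⟫ = 0 → ‖w‖ = 1 → E' (p x₀) w ≤ 0 := by
    intro w hwmem hwperp hwnorm
    by_contra hpos'
    push_neg at hpos'
    have hEw : Continuous fun ξ : X => E' ξ w := hE'.clm_apply continuous_const
    have hopen : IsOpen {ξ : X | 0 < E' ξ w} := isOpen_lt continuous_const hEw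
    obtain ⟨r, hr, hrball⟩ := Metric.isOpen_iff.mp hopen (p x₀) hpos'
    have hmin' : {v : X | E (p x₀) ≤ E (p v)} ∈ nhdsWithin x₀ S := hmin
    obtain ⟨η₁, hη₁, hminball⟩ := Metric.mem_nhdsWithin_iff.mp hmin'
    set M : ℝ := ‖p x₀‖ + 1 with hM
    have hM1 : 1 ≤ M := by rw [hM, le_add_iff_nonneg_left]; exact norm_nonneg _
    have hM0 : 0 < M := by linarith only [hM1]
    set ρ : ℝ := min r δ₀ with hρ
    have hρpos : 0 < ρ := lt_min hr hδ₀
    have hρr : ρ ≤ r := min_le_left _ _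
    have hρδ₀ : ρ ≤ δ₀ := min_le_right _ _
    set ε : ℝ := min 1 (min (ρ / 4) (α / 2)) with hε
    have hεpos : 0 < ε := by
      apply lt_min one_pos
      exact lt_min (by positivity) (by positivity)
    have hε1 : ε ≤ 1 := min_le_left _ _
    have hερ : ε ≤ ρ / 4 := le_trans (min_le_right _ _) (min_le_left _ _)
    have hεα : ε ≤ α / 2 := le_trans (min_le_right _ _) (min_le_right _ _)
    obtain ⟨η, hη, hpball⟩ := (Metric.continuousWithinAt_iff.mp hpcont) ε hεpos
    set c : ℝ :=
      min 1 (min (η / 2) (min (δ / 2) (min (η₁ / 2) (min (ρ / (8 * M)) (α / (8 * M))))))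
      with hc
    have hcpos : 0 < c := by
      refine lt_min one_pos (lt_min (by positivity) (lt_min (by positivity)
        (lt_min (by positivity) (lt_min (by positivity) (by positivity)))))
    have hc1 : c ≤ 1 := min_le_left _ _
    have hcη : c ≤ η / 2 := le_trans (min_le_right _ _) (min_le_left _ _)
    have hcδ : c ≤ δ / 2 :=
      le_trans (min_le_right _ _) (le_trans (min_le_right _ _) (min_le_left _ _))
    have hcη₁ : c ≤ η₁ / 2 :=
      le_trans (min_le_right _ _) (le_trans (min_le_right _ _)
        (le_trans (min_le_right _ _) (min_le_left _ _)))
    have hcρ : c ≤ ρ / (8 * M) :=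
      le_trans (min_le_right _ _) (le_trans (min_le_right _ _)
        (le_trans (min_le_right _ _) (le_trans (min_le_right _ _) (min_le_left _ _))))
    have hcα : c ≤ α / (8 * M) :=
      le_trans (min_le_right _ _) (le_trans (min_le_right _ _)
        (le_trans (min_le_right _ _) (le_trans (min_le_right _ _) (min_le_right _ _))))
    set s : ℝ := -(c / 2) with hsdef
    have hsneg : s < 0 := by simp [hsdef]; positivity
    have hsabs : |s| = c / 2 := by
      rw [hsdef, abs_neg, abs_of_pos (by positivity)]
    have hs1 : |s| ≤ 1 := by rw [hsabs]; linarith only [hc1, hcpos]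
    have h2sη : 2 * |s| < η := by rw [hsabs]; linarith only [hcη, hη]
    have h2sδ : 2 * |s| < δ := by rw [hsabs]; linarith only [hcδ, hδ]
    have h2sη₁ : 2 * |s| < η₁ := by rw [hsabs]; linarith only [hcη₁, hη₁]
    have hMsρ : M * |s| ≤ ρ / 8 := by
      rw [hsabs]
      have hMc : M * c ≤ M * (ρ / (8 * M)) := mul_le_mul_of_nonneg_left hcρ (le_of_lt hM0)
      have h8 : M * (ρ / (8 * M)) = ρ / 8 := by field_simp
      linarith only [hMc, h8, hρpos]
    have hMsα : M * (2 * |s|) ≤ α / 8 := by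
      rw [hsabs]
      have hMc : M * c ≤ M * (α / (8 * M)) := mul_le_mul_of_nonneg_left hcα (le_of_lt hM0)
      have h8 : M * (α / (8 * M)) = α / 8 := by field_simp
      linarith only [hMc, h8]
    -- the perturbed unit vector v
    set n : ℝ := ‖x₀ + s • w‖ with hn
    have hn_sq : n ^ 2 = 1 + s ^ 2 := by
      rw [hn, @norm_add_sq_real, real_inner_smul_right, hwperp, norm_smul, hwnorm,
        hx₀norm, Real.norm_eq_abs]
      simp [sq_abs]
    have hn_nonneg : 0 ≤ n := norm_nonneg _
    have hn1 : 1 ≤ n := by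
      nlinarith only [hn_sq, hn_nonneg, sq_nonneg s, sq_nonneg (n - 1), sq_nonneg (n + 1)]
    have hn0 : 0 < n := by linarith only [hn1]
    have hn_ne : n ≠ 0 := ne_of_gt hn0
    have hn_le : n ≤ 1 + s ^ 2 := by
      nlinarith only [hn_sq, hn_nonneg, sq_nonneg s, sq_nonneg (s ^ 2), sq_nonneg (n - 1 - s ^ 2)]
    set v : X := n⁻¹ • (x₀ + s • w) with hv
    have hvmem : v ∈ Lᗮ :=
      Submodule.smul_mem _ _ (Submodule.add_mem _ hx₀mem (Submodule.smul_mem _ _ hwmem))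
    have hvnorm : ‖v‖ = 1 := by
      rw [hv, norm_smul, ← hn, Real.norm_eq_abs, abs_inv, abs_of_pos hn0,
        inv_mul_cancel₀ hn_ne]
    have hninv_le : n⁻¹ ≤ 1 := by
      rw [inv_le_one_iff₀]; right; exact hn1
    have hninv_nonneg : 0 ≤ n⁻¹ := by positivity
    have hvx₀ : ‖v - x₀‖ ≤ 2 * |s| := by
      have hrw : v - x₀ = (n⁻¹ * s) • w + (n⁻¹ - 1) • x₀ := by
        rw [hv]; module
      rw [hrw]
      have e1 : ‖(n⁻¹ * s) • w‖ ≤ |s| := by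
        rw [norm_smul, hwnorm, mul_one, Real.norm_eq_abs, abs_mul, abs_inv,
          abs_of_pos hn0]
        calc n⁻¹ * |s| ≤ 1 * |s| := mul_le_mul_of_nonneg_right hninv_le (abs_nonneg s)
          _ = |s| := one_mul _
      have e2 : ‖(n⁻¹ - 1) • x₀‖ ≤ |s| := by
        rw [norm_smul, hx₀norm, mul_one, Real.norm_eq_abs]
        have hfrac : 1 - n⁻¹ = (n - 1) / n := by field_simp
        have hle : 1 - n⁻¹ ≤ n - 1 := by
          rw [hfrac]
          exact div_le_self (by linarith) hn1
        have habs : |n⁻¹ - 1| = 1 - n⁻¹ := by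
          rw [abs_of_nonpos (by linarith)]; ring
        have hsq : s ^ 2 ≤ |s| := by nlinarith only [sq_abs s, abs_nonneg s, hs1]
        rw [habs]
        linarith only [hle, hn_le, hsq]
      calc ‖(n⁻¹ * s) • w + (n⁻¹ - 1) • x₀‖
          ≤ ‖(n⁻¹ * s) • w‖ + ‖(n⁻¹ - 1) • x₀‖ := norm_add_le _ _
        _ ≤ 2 * |s| := by linarith only [e1, e2]
    have hvδ : ‖v - x₀‖ < δ := lt_of_le_of_lt hvx₀ h2sδ
    have hvS : v ∈ S := ⟨hvmem, hvnorm, hvδ⟩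
    have hpv_close : ‖p v - p x₀‖ < ε := by
      have := hpball hvS (by rw [dist_eq_norm]; exact lt_of_le_of_lt hvx₀ h2sη)
      rwa [dist_eq_norm] at this
    obtain ⟨⟨u', hu', t', ht', hpveq⟩, _⟩ := hp v hvmem hvnorm hvδ
    have hu'v : ⟪u', v⟫ = 0 := (Submodule.mem_orthogonal L v).mp hvmem u' hu'
    have hu₀x₀ : ⟪u₀, x₀⟫ = 0 := (Submodule.mem_orthogonal L x₀).mp hx₀mem u₀ hu₀
    have ht'val : ⟪p v, v⟫ = t' := by
      rw [hpveq, inner_add_left, real_inner_smul_left, hu'v,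
        real_inner_self_eq_norm_sq, hvnorm]
      ring
    have ht₀val : ⟪p x₀, x₀⟫ = t₀ := by
      rw [hPeq, inner_add_left, real_inner_smul_left, hu₀x₀,
        real_inner_self_eq_norm_sq, hx₀norm]
      ring
    have hsplit : ⟪p v, v⟫ - ⟪p x₀, x₀⟫ = ⟪p v - p x₀, v⟫ + ⟪p x₀, v - x₀⟫ := by
      rw [inner_sub_left, inner_sub_right]; ring
    have hib1 : |⟪p v - p x₀, v⟫| ≤ ‖p v - p x₀‖ := by
      have := abs_real_inner_le_norm (p v - p x₀) v
      rwa [hvnorm, mul_one] at this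
    have hib2 : |⟪p x₀, v - x₀⟫| ≤ ‖p x₀‖ * (2 * |s|) := by
      have h1 := abs_real_inner_le_norm (p x₀) (v - x₀)
      have h2 : ‖p x₀‖ * ‖v - x₀‖ ≤ ‖p x₀‖ * (2 * |s|) :=
        mul_le_mul_of_nonneg_left hvx₀ (norm_nonneg _)
      linarith
    have hpx₀M : ‖p x₀‖ ≤ M := by rw [hM]; linarith only []
    have ht'diff : |t' - t₀| ≤ ε + α / 8 := by
      rw [← ht'val, ← ht₀val, hsplit]
      have h3 : ‖p x₀‖ * (2 * |s|) ≤ M * (2 * |s|) :=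
        mul_le_mul_of_nonneg_right hpx₀M (by positivity)
      calc |⟪p v - p x₀, v⟫ + ⟪p x₀, v - x₀⟫|
          ≤ |⟪p v - p x₀, v⟫| + |⟪p x₀, v - x₀⟫| := abs_add_le _ _
        _ ≤ ε + α / 8 :=
            le_trans (add_le_add hib1 hib2)
              (add_le_add (le_of_lt hpv_close) (le_trans h3 hMsα))
    have ht'pos : 0 < t' := by
      have h := abs_le.mp ht'diff
      linarith only [h.1, hεα, ht₀α, hα]
    have ht'M : t' ≤ M := by
      have h1 : t' ≤ ‖p v‖ := by
        rw [← ht'val]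
        have := real_inner_le_norm (p v) v
        rwa [hvnorm, mul_one] at this
      have h2 : ‖p v‖ ≤ ‖p x₀‖ + ε := by
        linarith only [norm_sub_norm_le (p v) (p x₀), le_of_lt hpv_close]
      rw [hM]; linarith only [h1, h2, hε1]
    -- the comparison point in the half space L_{x₀}
    set σ : ℝ := t' * s / n with hσ
    have hσneg : σ < 0 := by
      rw [hσ]
      apply div_neg_of_neg_of_pos _ hn0
      exact mul_neg_of_pos_of_neg ht'pos hsneg
    have hσabs : |σ| ≤ M * |s| := by
      rw [hσ, abs_div, abs_mul, abs_of_pos hn0]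
      have h1 : |t'| * |s| ≤ M * |s| :=
        mul_le_mul_of_nonneg_right (by rw [abs_of_pos ht'pos]; exact ht'M) (abs_nonneg s)
      calc |t'| * |s| / n ≤ |t'| * |s| / 1 := by
            apply div_le_div_of_nonneg_left _ one_pos hn1
            positivity
        _ = |t'| * |s| := div_one _
        _ ≤ M * |s| := h1
    set w₀' : X := p v - σ • w with hw₀'
    have hw₀'eq : p v = w₀' + σ • w := by rw [hw₀']; abel
    have hw₀'half : w₀' ∈ halfSpace L x₀ := by
      refine ⟨u', hu', t' / n, by positivity, ?_⟩
      rw [hw₀', hpveq, hv, hσ]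
      have heq : t' • (n⁻¹ • (x₀ + s • w)) = (t' / n) • x₀ + (t' * s / n) • w := by
        module
      rw [heq]; abel
    have hw₀'dist : ‖w₀' - p x₀‖ < ρ / 2 := by
      have h1 : ‖w₀' - p x₀‖ ≤ ‖p v - p x₀‖ + |σ| := by
        have : w₀' - p x₀ = (p v - p x₀) + (-σ • w) := by rw [hw₀']; module
        rw [this]
        calc ‖(p v - p x₀) + (-σ • w)‖ ≤ ‖p v - p x₀‖ + ‖(-σ) • w‖ := norm_add_le _ _
          _ = ‖p v - p x₀‖ + |σ| := by rw [norm_smul, hwnorm, mul_one, Real.norm_eq_abs, abs_neg]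
      have hsum : ε + M * |s| < ρ / 2 := by linarith only [hερ, hMsρ, hρpos]
      exact lt_of_le_of_lt h1 (lt_trans (add_lt_add_of_lt_of_le hpv_close hσabs) hsum)
    -- mean value theorem on the segment from w₀' to p v
    have hcontφ : ContinuousOn (fun τ : ℝ => E (w₀' + τ • w)) (Set.Icc σ 0) := by
      apply Continuous.continuousOn
      exact hEc.comp (continuous_const.add (continuous_id.smul continuous_const))
    have hderivφ : ∀ τ ∈ Set.Ioo σ 0,
        HasDerivAt (fun τ : ℝ => E (w₀' + τ • w)) (E' (w₀' + τ • w) w) τ := by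
      intro τ _
      have h1 : HasDerivAt (fun τ : ℝ => w₀' + τ • w) w τ := by
        simpa using ((hasDerivAt_id τ).smul_const w).const_add w₀'
      exact (hE (w₀' + τ • w)).comp_hasDerivAt τ h1
    obtain ⟨cm, hcm, hslope⟩ :=
      exists_hasDerivAt_eq_slope (fun τ : ℝ => E (w₀' + τ • w))
        (fun τ : ℝ => E' (w₀' + τ • w) w) hσneg hcontφ hderivφ
    have hcm_abs : |cm| ≤ |σ| := by
      obtain ⟨h1, h2⟩ := hcm
      rw [abs_of_nonpos (le_of_lt h2), abs_of_nonpos (le_of_lt hσneg)]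
      linarith only [h1]
    have hξdist : ‖(w₀' + cm • w) - p x₀‖ < r := by
      have h1 : ‖(w₀' + cm • w) - p x₀‖ ≤ ‖w₀' - p x₀‖ + |cm| := by
        have : (w₀' + cm • w) - p x₀ = (w₀' - p x₀) + cm • w := by abel
        rw [this]
        calc ‖(w₀' - p x₀) + cm • w‖ ≤ ‖w₀' - p x₀‖ + ‖cm • w‖ := norm_add_le _ _
          _ = ‖w₀' - p x₀‖ + |cm| := by rw [norm_smul, hwnorm, mul_one, Real.norm_eq_abs]
      have h2 : |cm| ≤ M * |s| := le_trans hcm_abs hσabs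
      have h3 : ‖w₀' - p x₀‖ + |cm| < ρ / 2 + ρ / 8 :=
        add_lt_add_of_lt_of_le hw₀'dist (le_trans h2 hMsρ)
      have h4 : ρ / 2 + ρ / 8 ≤ r := by linarith only [hρr, hρpos]
      exact lt_of_le_of_lt h1 (lt_of_lt_of_le h3 h4)
    have hξpos : 0 < E' (w₀' + cm • w) w := by
      apply hrball
      rw [Metric.mem_ball, dist_eq_norm]
      exact hξdist
    have hEcomp : E (p v) < E w₀' := by
      have hslope2 := hslope
      simp only [zero_smul, add_zero, ← hw₀'eq] at hslope2
      have hden : 0 < 0 - σ := by linarith only [hσneg]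
      have hq := hξpos
      rw [hslope2] at hq
      have hnum : 0 < E w₀' - E (p v) := by
        by_contra hcon
        push_neg at hcon
        have hq2 : (E w₀' - E (p v)) / (0 - σ) ≤ 0 := div_nonpos_of_nonpos_of_nonneg
          (by linarith only [hcon]) (le_of_lt hden)
        linarith only [hq, hq2]
      linarith only [hnum]
    have hEmax : E w₀' ≤ E (p x₀) := by
      apply hmax w₀' hw₀'half
      exact lt_of_lt_of_le hw₀'dist (by linarith only [hρδ₀, hρpos])
    have hEmin : E (p x₀) ≤ E (p v) := by
      apply hminball
      constructor
      · rw [Metric.mem_ball, dist_eq_norm]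
        exact lt_of_le_of_lt hvx₀ h2sη₁
      · exact hvS
    linarith only [hEcomp, hEmax, hEmin]
  -- assemble: E'(p x₀) vanishes on all of X
  haveI : CompleteSpace L := hL.completeSpace_coe
  ext x
  have hzero : ∀ w : X, w ∈ Lᗮ → ⟪x₀, w⟫ = 0 → E' (p x₀) w = 0 := by
    intro w hwmem hwperp
    by_cases hw0 : w = 0
    · simp [hw0]
    · have hnw : 0 < ‖w‖ := norm_pos_iff.mpr hw0
      have h1 := hB (‖w‖⁻¹ • w) (Submodule.smul_mem _ _ hwmem)
        (by rw [real_inner_smul_right, hwperp, mul_zero])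
        (by rw [norm_smul, Real.norm_eq_abs, abs_inv, abs_of_pos hnw,
          inv_mul_cancel₀ (ne_of_gt hnw)])
      have h2 := hB (-(‖w‖⁻¹ • w)) (Submodule.neg_mem _ (Submodule.smul_mem _ _ hwmem))
        (by rw [inner_neg_right, real_inner_smul_right, hwperp, mul_zero, neg_zero])
        (by rw [norm_neg, norm_smul, Real.norm_eq_abs, abs_inv, abs_of_pos hnw,
          inv_mul_cancel₀ (ne_of_gt hnw)])
      rw [map_neg] at h2
      have h3 : E' (p x₀) (‖w‖⁻¹ • w) = 0 := le_antisymm h1 (by linarith)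
      rw [map_smul] at h3
      have h4 : ‖w‖⁻¹ ≠ 0 := inv_ne_zero (ne_of_gt hnw)
      field_simp at h3
      simpa [hw0] using h3
  set u : X := (L.orthogonalProjectionOnto x : X) with hu
  have huL : u ∈ L := SetLike.coe_mem _
  have hxu : x - u ∈ Lᗮ := L.sub_starProjection_mem_orthogonal x
  set cc : ℝ := ⟪x₀, x - u⟫ with hcc
  set w : X := x - u - cc • x₀ with hwdef
  have hwmem : w ∈ Lᗮ :=
    Submodule.sub_mem _ hxu (Submodule.smul_mem _ _ hx₀mem)
  have hwperp : ⟪x₀, w⟫ = 0 := by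
    rw [hwdef, inner_sub_right, real_inner_smul_right, real_inner_self_eq_norm_sq,
      hx₀norm]
    simp [hcc]
  have hxdecomp : x = u + cc • x₀ + w := by rw [hwdef]; abel
  have : E' (p x₀) x = E' (p x₀) u + cc * E' (p x₀) x₀ + E' (p x₀) w := by
    rw [hxdecomp]
    simp [map_add, map_smul]
  rw [this, hA u huL, hAx, hzero w hwmem hwperp]
  simp
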